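/- Let L/K be a field extension of finite degree m, let h, k, n be positive integers with h < k < n, and let U be an [n,k]_{L/K} system (a K-subspace of L^k with dim_K U = n whose L-linear span is L^k) that is h-scattered, i.e., dim_K(U ∩ W) ≤ h for every L-subspace W of L^k with dim_L W = h. Then n·(h + 1) ≤ k·m. -/

import Mathlib

open Module Submodule

section Aux

variable {K L : Type*} [Field K] [Field L] [Algebra K L] [FiniteDimensional K L]
variable {h k : ℕ}

/-- Scatter-down: an `h`-scattered spanning system satisfies
`dim_K (U ⊓ W) ≤ dim_L W` for every `L`-subspace `W` with `dim_L W ≤ h`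
(stated with an auxiliary counter `t = h - dim_L W`). -/
private lemma scatter_down (hhk : h < k)
    (U : Submodule K (Fin k → L))
    (hUspan : Submodule.span L (U : Set (Fin k → L)) = ⊤)
    (hsc : ∀ W : Submodule L (Fin k → L), Module.finrank L W = h →
      Module.finrank K ↥(U ⊓ W.restrictScalars K) ≤ h) :
    ∀ (t : ℕ) (W : Submodule L (Fin k → L)), Module.finrank L W + t = h →
      Module.finrank K ↥(U ⊓ W.restrictScalars K) ≤ Module.finrank L W := by
  haveI : FiniteDimensional K (Fin k → L) := Module.Finite.trans L (Fin k → L)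
  intro t
  induction t with
  | zero =>
    intro W hW
    rw [Nat.add_zero] at hW
    rw [hW]
    exact hsc W hW
  | succ t ih =>
    intro W hW
    have hfr : Module.finrank L W < k := by
      have hle : Module.finrank L W ≤ h := by omega
      omega
    have hWne : W ≠ ⊤ := by
      intro hEq
      rw [hEq, finrank_top, Module.finrank_fintype_fun_eq_card, Fintype.card_fin] at hfr
      omega
    obtain ⟨u, huU, huW⟩ : ∃ u, u ∈ U ∧ u ∉ W := by
      by_contra hcon
      push_neg at hcon
      exact hWne (top_le_iff.mp (hUspan ▸ Submodule.span_le.mpr (fun x hx => hcon x hx)))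
    have hu0 : u ≠ 0 := fun h0 => huW (h0 ▸ W.zero_mem)
    set W' : Submodule L (Fin k → L) := W ⊔ Submodule.span L {u} with hW'def
    have huW' : u ∈ W' :=
      (le_sup_right : Submodule.span L {u} ≤ W') (Submodule.mem_span_singleton_self u)
    have hWlt : W < W' := lt_of_le_of_ne le_sup_left (fun hEq => huW (hEq ▸ huW'))
    have hW'le : Module.finrank L W' ≤ Module.finrank L W + 1 := by
      refine (Submodule.finrank_add_le_finrank_add_finrank W (Submodule.span L {u})).trans ?_
      rw [finrank_span_singleton hu0]
    have hW'gt : Module.finrank L W < Module.finrank L W' :=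
      Submodule.finrank_lt_finrank_of_lt hWlt
    have hW'eq : Module.finrank L W' = Module.finrank L W + 1 := by omega
    have hIH := ih W' (by omega)
    have hIlt : (U ⊓ W.restrictScalars K) < (U ⊓ W'.restrictScalars K) := by
      refine lt_of_le_of_ne (inf_le_inf_left U (fun x hx => ?_)) ?_
      · exact (le_sup_left : W ≤ W') hx
      · intro hEq
        have hmem : u ∈ U ⊓ W'.restrictScalars K := ⟨huU, huW'⟩
        rw [← hEq] at hmem
        exact huW hmem.2
    have hflt := Submodule.finrank_lt_finrank_of_lt hIlt
    omega

/-- Key lemma: if `c₁, …, c_r ∈ L` are `K`-linearly independent with `r ≤ h+1`,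
`uᵢ ∈ U` and `∑ cᵢ • uᵢ = 0`, then all `uᵢ = 0`. -/
private lemma key_indep (hhk : h < k)
    (U : Submodule K (Fin k → L))
    (hUspan : Submodule.span L (U : Set (Fin k → L)) = ⊤)
    (hsc : ∀ W : Submodule L (Fin k → L), Module.finrank L W = h →
      Module.finrank K ↥(U ⊓ W.restrictScalars K) ≤ h) :
    ∀ (r : ℕ), r ≤ h + 1 → ∀ (c : Fin r → L), LinearIndependent K c →
      ∀ (u : Fin r → (Fin k → L)), (∀ i, u i ∈ U) →
      (∑ i, c i • u i) = 0 → ∀ i, u i = 0 := by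
  haveI : FiniteDimensional K (Fin k → L) := Module.Finite.trans L (Fin k → L)
  intro r
  induction r with
  | zero => intro _ c _ u _ _ i; exact i.elim0
  | succ r ih =>
    intro hr c hc u hu hsum
    classical
    have hclast : c (Fin.last r) ≠ 0 := hc.ne_zero (Fin.last r)
    set W0 : Submodule L (Fin k → L) :=
      Submodule.span L (Set.range (fun i : Fin r => u i.castSucc)) with hW0def
    have hcastmem : ∀ i : Fin r, u i.castSucc ∈ W0 :=
      fun i => Submodule.subset_span ⟨i, rfl⟩
    have hlastmem : u (Fin.last r) ∈ W0 := by
      have hs : ∑ i : Fin r, c i.castSucc • u i.castSucc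
          + c (Fin.last r) • u (Fin.last r) = 0 := by
        have hs0 := hsum
        rw [Fin.sum_univ_castSucc] at hs0
        exact hs0
      have hEq : c (Fin.last r) • u (Fin.last r)
          = -∑ i : Fin r, c i.castSucc • u i.castSucc :=
        eq_neg_of_add_eq_zero_right hs
      have h2 : u (Fin.last r)
          = (c (Fin.last r))⁻¹ • (c (Fin.last r) • u (Fin.last r)) := by
        rw [smul_smul, inv_mul_cancel₀ hclast, one_smul]
      rw [h2, hEq]
      exact W0.smul_mem _ (neg_mem (Submodule.sum_mem _
        (fun i _ => W0.smul_mem _ (hcastmem i))))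
    have hmemW0 : ∀ i : Fin (r + 1), u i ∈ W0 :=
      fun i => Fin.lastCases hlastmem hcastmem i
    have hW0rank : Module.finrank L W0 ≤ r := by
      have := finrank_range_le_card (R := L) (fun i : Fin r => u i.castSucc)
      have h' : Set.finrank L (Set.range fun i : Fin r => u i.castSucc) ≤ r := by simpa using this
      exact h'
    have hUW0 : Module.finrank K ↥(U ⊓ W0.restrictScalars K) ≤ r := by
      have hsd := scatter_down hhk U hUspan hsc (h - Module.finrank L W0) W0 (by omega)
      omega
    have hnotind : ¬ LinearIndependent K
        (fun i : Fin (r + 1) => (⟨u i, hu i, hmemW0 i⟩ : ↥(U ⊓ W0.restrictScalars K))) := by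
      intro hind
      have hcard := hind.fintype_card_le_finrank
      rw [Fintype.card_fin] at hcard
      omega
    obtain ⟨a, hasum, j, haj⟩ := Fintype.not_linearIndependent_iff.mp hnotind
    have hasumV : ∑ i : Fin (r + 1), a i • u i = 0 := by
      have := congrArg (Subtype.val) hasum
      simpa using this
    set σ : Equiv.Perm (Fin (r + 1)) := Equiv.swap j (Fin.last r) with hσdef
    set C : Fin (r + 1) → L := fun i => c (σ i) with hCdef
    set A : Fin (r + 1) → K := fun i => a (σ i) with hAdef
    set w : Fin (r + 1) → (Fin k → L) := fun i => u (σ i) with hwdef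
    have hCsum : ∑ i, C i • w i = 0 :=
      (Equiv.sum_comp σ (fun i => c i • u i)).trans hsum
    have hAsum : ∑ i, A i • w i = 0 :=
      (Equiv.sum_comp σ (fun i => a i • u i)).trans hasumV
    have hC : LinearIndependent K C := hc.comp σ σ.injective
    have hAlast : A (Fin.last r) ≠ 0 := by
      simpa [hAdef, hσdef, Equiv.swap_apply_right] using haj
    have hwmem : ∀ i, w i ∈ U := fun i => hu _
    set b : Fin r → K := fun i => -((A (Fin.last r))⁻¹ * A i.castSucc) with hbdef
    have hwlast : w (Fin.last r) = ∑ i : Fin r, b i • w i.castSucc := by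
      have hAs : ∑ i : Fin r, A i.castSucc • w i.castSucc
          + A (Fin.last r) • w (Fin.last r) = 0 := by
        have hs0 := hAsum
        rw [Fin.sum_univ_castSucc] at hs0
        exact hs0
      have h1 : A (Fin.last r) • w (Fin.last r)
          = -∑ i : Fin r, A i.castSucc • w i.castSucc :=
        eq_neg_of_add_eq_zero_right hAs
      have h2 : w (Fin.last r)
          = (A (Fin.last r))⁻¹ • (A (Fin.last r) • w (Fin.last r)) := by
        rw [smul_smul, inv_mul_cancel₀ hAlast, one_smul]
      rw [h2, h1, smul_neg, Finset.smul_sum]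
      rw [← Finset.sum_neg_distrib]
      refine Finset.sum_congr rfl (fun i _ => ?_)
      rw [smul_smul, ← neg_smul]
    set c'' : Fin r → L := fun i => C i.castSucc + b i • C (Fin.last r) with hc''def
    have hsum'' : ∑ i : Fin r, c'' i • w i.castSucc = 0 := by
      have hCs : ∑ i : Fin r, C i.castSucc • w i.castSucc
          + C (Fin.last r) • w (Fin.last r) = 0 := by
        have hs0 := hCsum
        rw [Fin.sum_univ_castSucc] at hs0
        exact hs0
      have hstep : ∑ i : Fin r, c'' i • w i.castSucc
          = ∑ i : Fin r, C i.castSucc • w i.castSucc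
            + C (Fin.last r) • w (Fin.last r) := by
        rw [hwlast, Finset.smul_sum, ← Finset.sum_add_distrib]
        refine Finset.sum_congr rfl (fun i _ => ?_)
        rw [hc''def, add_smul, smul_assoc, smul_comm (b i) (C (Fin.last r))]
      rw [hstep]; exact hCs
    have hc'' : LinearIndependent K c'' := by
      rw [Fintype.linearIndependent_iff]
      intro g hg
      have hCind := Fintype.linearIndependent_iff.mp hC
      set g' : Fin (r + 1) → K :=
        fun i => Fin.lastCases (∑ i : Fin r, g i * b i) (fun i => g i) i with hg'def
      have expand : ∑ i : Fin r, g i • c'' i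
          = ∑ i : Fin r, g i • C i.castSucc
            + (∑ i : Fin r, g i * b i) • C (Fin.last r) := by
        simp only [hc''def, smul_add, smul_smul]
        rw [Finset.sum_add_distrib, Finset.sum_smul]
      have hzero : ∑ i : Fin (r + 1), g' i • C i = 0 := by
        rw [Fin.sum_univ_castSucc]
        simp only [hg'def, Fin.lastCases_castSucc, Fin.lastCases_last]
        rw [← expand]
        exact hg
      intro i
      have := hCind g' hzero i.castSucc
      simpa [hg'def] using this
    have hwc : ∀ i : Fin r, w i.castSucc = 0 :=
      ih (by omega) c'' hc'' (fun i => w i.castSucc) (fun i => hwmem _) hsum''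
    have hwlast0 : w (Fin.last r) = 0 := by
      rw [hwlast]
      simp [hwc]
    have hwall : ∀ i : Fin (r + 1), w i = 0 :=
      fun i => Fin.lastCases hwlast0 hwc i
    intro i
    have := hwall (σ i)
    simpa [hwdef, hσdef, Equiv.swap_apply_self] using this

end Aux

/-- bound for `h`-scattered systems: an `h`-scattered
`[n,k]_{L/K}` system with `k < n` satisfies `n(h+1) ≤ km`, where `m = [L:K]`. -/
theorem h_scattered_bound (K L : Type*) [Field K] [Field L] [Algebra K L]
    [FiniteDimensional K L] (m h k n : ℕ) (hm : Module.finrank K L = m)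
    (hh : 0 < h) (hhk : h < k) (hkn : k < n)
    (U : Submodule K (Fin k → L))
    (hUdim : Module.finrank K U = n)
    (hUspan : Submodule.span L (U : Set (Fin k → L)) = ⊤)
    (hsc : ∀ W : Submodule L (Fin k → L), Module.finrank L W = h →
      Module.finrank K ↥(U ⊓ W.restrictScalars K) ≤ h) :
    n * (h + 1) ≤ k * m := by
  classical
  haveI : FiniteDimensional K (Fin k → L) := Module.Finite.trans L (Fin k → L)
  set j := min m (h + 1) with hjdef
  have hjm : j ≤ m := min_le_left _ _
  have hjh : j ≤ h + 1 := min_le_right _ _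
  have hjle : j ≤ Module.finrank K L := by rw [hm]; exact hjm
  set lam : Fin j → L := fun i => Module.finBasis K L (Fin.castLE hjle i) with hlamdef
  have hlam : LinearIndependent K lam :=
    (Module.finBasis K L).linearIndependent.comp _ (Fin.castLE_injective hjle)
  set Φ : (Fin j → ↥U) →ₗ[K] (Fin k → L) :=
    ∑ i : Fin j, lam i • ((U.subtype).comp (LinearMap.proj i)) with hΦdef
  have hΦ : ∀ v : Fin j → ↥U, Φ v = ∑ i : Fin j, lam i • (v i : Fin k → L) := by
    intro v
    simp [hΦdef, LinearMap.sum_apply, LinearMap.smul_apply]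
  have hker : ∀ v : Fin j → ↥U, Φ v = 0 → v = 0 := by
    intro v hv
    have hall := key_indep hhk U hUspan hsc j hjh lam hlam
      (fun i => (v i : Fin k → L)) (fun i => (v i).2)
      (by rw [← hΦ v]; exact hv)
    funext i
    exact Subtype.coe_injective (by simpa using hall i)
  have hinj : Function.Injective Φ :=
    (injective_iff_map_eq_zero Φ).mpr hker
  have hle := LinearMap.finrank_le_finrank_of_injective hinj
  have h1 : Module.finrank K (Fin j → ↥U) = j * n := by
    rw [Module.finrank_pi_fintype]
    simp [hUdim, Finset.sum_const, mul_comm]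
  have h2 : Module.finrank K (Fin k → L) = k * m := by
    have hmm := Module.finrank_mul_finrank K L (Fin k → L)
    rw [Module.finrank_fintype_fun_eq_card, Fintype.card_fin, hm] at hmm
    rw [← hmm]
    exact Nat.mul_comm m k
  have hmain : j * n ≤ k * m := by rw [← h1, ← h2]; exact hle
  have hm1 : 0 < m := by
    have := Module.finrank_pos (R := K) (M := L)
    omega
  rcases le_or_gt m h with hmh | hmh
  · exfalso
    have hj : j = m := by rw [hjdef]; exact Nat.min_eq_left (by omega)
    rw [hj] at hmain
    have hnk : n ≤ k := by
      refine Nat.le_of_mul_le_mul_left ?_ hm1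
      calc m * n ≤ k * m := hmain
        _ = m * k := Nat.mul_comm _ _
    omega
  · have hj : j = h + 1 := by omega
    rw [hj] at hmain
    calc n * (h + 1) = (h + 1) * n := Nat.mul_comm _ _
      _ ≤ k * m := hmain
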